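/- In the (ε, H)-smoothed game, a bidder bidding at its minimum multiplier incurs real debt at most m·ε·(2·max_{k,j} v_{k,j} / v_i* + 1): for each good j that bidder i wins a positive fraction of when α_i = 1 + 2ε/v_i*, the per-good debt x_{i,j}(p_{i,j} − v_{i,j}) is at most ε(2 max_{k,j} v_{k,j}/v_i* + 1), since either p_{i,j} < v_{i,j} + ε and the debt is negative or bounded by ε, or x_{i,j} > 0 requires p_{i,j} ≤ α_i v_{i,j} + ε ≤ v_{i,j} + 2ε·max_j v_{i,j}/v_i* + ε. Consequently, for sufficiently small ε the total debt (real debt plus artificial debt α_i ε − ε^{1/2}) is negative at the minimum multiplier. -/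

import Mathlib

/-- Highest bid `b_j* = max_k α_k v_{k,j}` for good `j`. -/
noncomputable def bstar {n m : ℕ} [NeZero n] (v : Fin n → Fin m → ℝ)
    (α : Fin n → ℝ) (j : Fin m) : ℝ :=
  Finset.univ.sup' Finset.univ_nonempty fun k => α k * v k j

/-- The smoothed allocation of good `j` to bidder `i`. -/
noncomputable def xalloc {n m : ℕ} [NeZero n] (v : Fin n → Fin m → ℝ) (ε : ℝ)
    (α : Fin n → ℝ) (j : Fin m) (i : Fin n) : ℝ :=
  if bstar v α j - ε ≤ α i * v i j then
    (α i * v i j - (bstar v α j - ε)) /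
      ∑ k ∈ Finset.univ.filter fun k => bstar v α j - ε ≤ α k * v k j,
        (α k * v k j - (bstar v α j - ε))
  else 0

/-- `v_i* = min{v_{i,j} : v_{i,j} > 0}`. -/
noncomputable def vstar {n m : ℕ} (v : Fin n → Fin m → ℝ) (i : Fin n) : ℝ :=
  sInf {r | ∃ j, v i j = r ∧ 0 < r}

/-- `max_{k,j} v_{k,j}`. -/
noncomputable def vmax {n m : ℕ} [NeZero n] [NeZero m] (v : Fin n → Fin m → ℝ) : ℝ :=
  Finset.univ.sup' Finset.univ_nonempty fun q : Fin n × Fin m => v q.1 q.2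

/-- `p_{i,j}`: the highest bid on good `j` among bidders other than `i` (0 if none). -/
noncomputable def pbid {n m : ℕ} (v : Fin n → Fin m → ℝ)
    (α : Fin n → ℝ) (i : Fin n) (j : Fin m) : ℝ :=
  sSup (insert 0 {b | ∃ k, k ≠ i ∧ b = α k * v k j})

/-- Per-good debt bound. -/
lemma pergood {n m : ℕ} [NeZero n] [NeZero m] (v : Fin n → Fin m → ℝ)
    (hv : ∀ i j, 0 ≤ v i j)
    (hvstar_pos : ∀ k, 0 < vstar v k)
    (hvmax : ∀ k j, v k j ≤ vmax v)
    (i : Fin n) (ε : ℝ) (hε : 0 < ε) (α : Fin n → ℝ)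
    (hαi : α i = 1 + 2 * ε / vstar v i) (j : Fin m) :
    xalloc v ε α j i * (pbid v α i j - v i j) ≤ ε * (2 * vmax v / vstar v i + 1) := by
  have hvs : 0 < vstar v i := hvstar_pos i
  have hvm0 : 0 ≤ vmax v := le_trans (hv i j) (hvmax i j)
  have hC : 0 ≤ ε * (2 * vmax v / vstar v i + 1) := by
    have h1 : 0 ≤ 2 * vmax v / vstar v i := div_nonneg (by linarith) hvs.le
    nlinarith
  by_cases hif : bstar v α j - ε ≤ α i * v i j
  · have hαipos : 0 < α i := by
      have : 0 ≤ 2 * ε / vstar v i := div_nonneg (by linarith) hvs.le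
      rw [hαi]; linarith
    set num : ℝ := α i * v i j - (bstar v α j - ε) with hnumdef
    set den : ℝ := ∑ k ∈ Finset.univ.filter fun k => bstar v α j - ε ≤ α k * v k j,
        (α k * v k j - (bstar v α j - ε)) with hdendef
    have hx : xalloc v ε α j i = num / den := by rw [xalloc, if_pos hif]
    have hnum : 0 ≤ num := by simp only [hnumdef]; linarith
    have hi_mem : i ∈ Finset.univ.filter fun k => bstar v α j - ε ≤ α k * v k j :=
      Finset.mem_filter.mpr ⟨Finset.mem_univ i, hif⟩
    have hle : num ≤ den := by
      refine Finset.single_le_sum (f := fun k => α k * v k j - (bstar v α j - ε)) (fun k hk => ?_) hi_mem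
      have := (Finset.mem_filter.mp hk).2
      show 0 ≤ α k * v k j - (bstar v α j - ε)
      linarith
    have hx0 : 0 ≤ num / den := div_nonneg hnum (hnum.trans hle)
    have hx1 : num / den ≤ 1 := by
      rcases eq_or_lt_of_le (hnum.trans hle) with h | h
      · rw [← h, div_zero]; exact zero_le_one
      · exact (div_le_one h).mpr hle
    have hb0 : 0 ≤ bstar v α j :=
      le_trans (mul_nonneg hαipos.le (hv i j))
        (Finset.le_sup' (fun k => α k * v k j) (Finset.mem_univ i))
    have hpb : pbid v α i j ≤ bstar v α j := by
      refine csSup_le ⟨0, Set.mem_insert _ _⟩ ?_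
      rintro b hb
      simp only [Set.mem_insert_iff, Set.mem_setOf_eq] at hb
      rcases hb with rfl | ⟨k, -, rfl⟩
      · exact hb0
      · exact Finset.le_sup' (fun k => α k * v k j) (Finset.mem_univ k)
    rw [hx]
    by_cases hpv : pbid v α i j - v i j ≤ 0
    · exact le_trans (mul_nonpos_of_nonneg_of_nonpos hx0 hpv) hC
    · push_neg at hpv
      have h3 : (2 * ε / vstar v i) * v i j ≤ (2 * ε / vstar v i) * vmax v :=
        mul_le_mul_of_nonneg_left (hvmax i j) (div_nonneg (by linarith) hvs.le)
      have h4 : ε * (2 * vmax v / vstar v i + 1) = (2 * ε / vstar v i) * vmax v + ε := by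
        field_simp
      have h2 : α i * v i j = v i j + (2 * ε / vstar v i) * v i j := by rw [hαi]; ring
      have h1 : pbid v α i j - v i j ≤ ε * (2 * vmax v / vstar v i + 1) := by
        rw [h4]; linarith
      calc num / den * (pbid v α i j - v i j) ≤ 1 * (pbid v α i j - v i j) :=
            mul_le_mul_of_nonneg_right hx1 hpv.le
        _ ≤ ε * (2 * vmax v / vstar v i + 1) := by rw [one_mul]; exact h1
  · rw [xalloc, if_neg hif, zero_mul]; exact hC

lemma sumbound {n m : ℕ} [NeZero n] [NeZero m] (v : Fin n → Fin m → ℝ)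
    (hv : ∀ i j, 0 ≤ v i j)
    (hvstar_pos : ∀ k, 0 < vstar v k)
    (hvmax : ∀ k j, v k j ≤ vmax v)
    (i : Fin n) (ε : ℝ) (hε : 0 < ε) (α : Fin n → ℝ)
    (hαi : α i = 1 + 2 * ε / vstar v i) :
    ∑ j, xalloc v ε α j i * (pbid v α i j - v i j)
      ≤ (m : ℝ) * ε * (2 * vmax v / vstar v i + 1) := by
  calc ∑ j, xalloc v ε α j i * (pbid v α i j - v i j)
      ≤ ∑ _j : Fin m, ε * (2 * vmax v / vstar v i + 1) :=
        Finset.sum_le_sum fun j _ => pergood v hv hvstar_pos hvmax i ε hε α hαi j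
    _ = (m : ℝ) * ε * (2 * vmax v / vstar v i + 1) := by
        rw [Finset.sum_const, Finset.card_univ, Fintype.card_fin, nsmul_eq_mul]; ring

/-- in the `(ε,H)`-smoothed game, a bidder bidding at its minimum multiplier
`1 + 2ε/v_i*` incurs real debt `∑_j x_{i,j}(p_{i,j} − v_{i,j})` at most
`m·ε·(2·max_{k,j} v_{k,j}/v_i* + 1)`; consequently for sufficiently small `ε` its total debt
(real debt plus artificial debt `α_i ε − ε^{1/2}`) is negative at the minimum multiplier. -/
theorem stmt6 {n m : ℕ} [NeZero n] [NeZero m] (v : Fin n → Fin m → ℝ) (A : ℝ)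
    (hv : ∀ i j, 0 ≤ v i j)
    (hvstar_pos : ∀ k, 0 < vstar v k)
    (hvstar_le : ∀ k j, 0 < v k j → vstar v k ≤ v k j)
    (hvmax : ∀ k j, v k j ≤ vmax v)
    (i : Fin n) :
    (∀ ε : ℝ, 0 < ε →
      ∀ α : Fin n → ℝ, (∀ k, 1 + 2 * ε / vstar v k ≤ α k ∧ α k ≤ A) →
        α i = 1 + 2 * ε / vstar v i →
        ∑ j, xalloc v ε α j i * (pbid v α i j - v i j)
          ≤ (m : ℝ) * ε * (2 * vmax v / vstar v i + 1)) ∧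
    (∃ ε₀ > (0 : ℝ), ∀ ε : ℝ, 0 < ε → ε < ε₀ →
      ∀ α : Fin n → ℝ, (∀ k, 1 + 2 * ε / vstar v k ≤ α k ∧ α k ≤ A) →
        α i = 1 + 2 * ε / vstar v i →
        ∑ j, xalloc v ε α j i * (pbid v α i j - v i j)
          + α i * ε - Real.sqrt ε < 0) := by
  have hvs : 0 < vstar v i := hvstar_pos i
  have hvm0 : 0 ≤ vmax v := le_trans (hv i default) (hvmax i default)
  constructor
  · intro ε hε α _ hαi
    exact sumbound v hv hvstar_pos hvmax i ε hε α hαi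
  · obtain ⟨K, hKdef⟩ : ∃ K : ℝ, K = (m : ℝ) * (2 * vmax v / vstar v i + 1) + 1 + 2 / vstar v i := ⟨_, rfl⟩
    have hK : 0 < K := by
      have h1 : 0 ≤ 2 * vmax v / vstar v i := div_nonneg (by linarith) hvs.le
      have h2 : 0 < 2 / vstar v i := div_pos (by norm_num) hvs
      have h3 : (0 : ℝ) ≤ m := Nat.cast_nonneg m
      have h4 : (0 : ℝ) ≤ (m : ℝ) * (2 * vmax v / vstar v i + 1) := by positivity
      rw [hKdef]; linarith
    refine ⟨min 1 (1 / K ^ 2), lt_min one_pos (div_pos one_pos (pow_pos hK 2)), ?_⟩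
    intro ε hε hεlt α hα hαi
    have h1 := sumbound v hv hvstar_pos hvmax i ε hε α hαi
    have hε1 : ε < 1 := lt_of_lt_of_le hεlt (min_le_left _ _)
    have hαiε : α i * ε = ε + 2 / vstar v i * ε ^ 2 := by rw [hαi]; ring
    have h2 : 2 / vstar v i * ε ^ 2 ≤ 2 / vstar v i * ε := by
      have hε2 : ε ^ 2 ≤ ε := by nlinarith
      exact mul_le_mul_of_nonneg_left hε2 (div_nonneg (by norm_num) hvs.le)
    have hsε : 0 < Real.sqrt ε := Real.sqrt_pos.mpr hε
    have hs : Real.sqrt ε * Real.sqrt ε = ε := Real.mul_self_sqrt hε.le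
    have hsK : Real.sqrt ε < 1 / K := by
      refine (Real.sqrt_lt' (by positivity)).mpr ?_
      calc ε < 1 / K ^ 2 := lt_of_lt_of_le hεlt (min_le_right _ _)
        _ = (1 / K) ^ 2 := by rw [one_div, one_div, inv_pow]
    have h3 : K * Real.sqrt ε < 1 := by
      have := mul_lt_mul_of_pos_left hsK hK
      rwa [mul_one_div, div_self hK.ne'] at this
    have h4 : K * ε - Real.sqrt ε < 0 := by nlinarith
    have hKe : K * ε = (m : ℝ) * ε * (2 * vmax v / vstar v i + 1) + ε + 2 / vstar v i * ε := by
      rw [hKdef]; ring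
    linarith
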